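/- For every integer r ≥ 2, ∑_φ (−1)^{k(φ)} = μ(r), where the sum extends over all ordered factorizations φ of r into factors each ≥ 2, k(φ) is the number of factors of φ, and μ is the Möbius function. (For r = 1 the only factorization is empty, giving sum 1 = μ(1).) -/

import Mathlib

open Finset

/-- Finset of ordered factorizations of `n` into factors `≥ 2`. -/
def ordFac : ℕ → Finset (List ℕ)
  | n =>
    if h : 2 ≤ n then
      ((n.divisors.filter (fun d => 2 ≤ d)).attach).biUnion
        (fun d => (ordFac (n / d.1)).image (d.1 :: ·))
    else {[]}
decreasing_by
  have hd := d.2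
  simp only [Finset.mem_filter, Nat.mem_divisors] at hd
  exact Nat.div_lt_self (by omega) (by omega)

lemma mem_ordFac : ∀ {n : ℕ}, 1 ≤ n → ∀ {l : List ℕ},
    (l ∈ ordFac n ↔ (∀ a ∈ l, 2 ≤ a) ∧ l.prod = n) := by
  intro n
  induction n using Nat.strong_induction_on with
  | _ n IH =>
    intro hn l
    rw [ordFac]
    by_cases h : 2 ≤ n
    · rw [dif_pos h]
      simp only [Finset.mem_biUnion, Finset.mem_attach, Finset.mem_image, true_and,
        Subtype.exists, Finset.mem_filter, Nat.mem_divisors]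
      constructor
      · rintro ⟨d, ⟨⟨hdvd, hn0⟩, hd2⟩, t, ht, rfl⟩
        have hnd : 1 ≤ n / d := Nat.div_pos (Nat.le_of_dvd (by omega) hdvd) (by omega)
        have := (IH (n / d) (Nat.div_lt_self (by omega) (by omega)) hnd).mp ht
        refine ⟨?_, ?_⟩
        · intro a ha
          rcases List.mem_cons.mp ha with rfl | ha
          · exact hd2
          · exact this.1 a ha
        · simp [List.prod_cons, this.2, Nat.mul_div_cancel' hdvd]
      · rintro ⟨hall, hprod⟩
        match l with
        | [] => simp at hprod; omega
        | a :: t =>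
          have ha2 : 2 ≤ a := hall a (List.mem_cons_self (a := a) (l := t))
          have hdvd : a ∣ n := hprod ▸ Dvd.intro t.prod (by rw [List.prod_cons, mul_comm])
          have htprod : t.prod = n / a := by
            have : n / a = t.prod := by
              rw [← hprod, List.prod_cons, Nat.mul_div_cancel_left _ (by omega : 0 < a)]
            omega
          have hnd : 1 ≤ n / a := Nat.div_pos (Nat.le_of_dvd (by omega) hdvd) (by omega)
          refine ⟨a, ⟨⟨hdvd, by omega⟩, ha2⟩, t, ?_, rfl⟩
          exact (IH (n / a) (Nat.div_lt_self (by omega) (by omega)) hnd).mpr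
            ⟨fun b hb => hall b (List.mem_cons_of_mem a hb), htprod⟩
    · have hn1 : n = 1 := by omega
      subst hn1
      rw [dif_neg h]
      simp only [Finset.mem_singleton]
      constructor
      · rintro rfl; simp
      · rintro ⟨hall, hprod⟩
        match l with
        | [] => rfl
        | a :: t =>
          have ha := hall a (List.mem_cons_self (a := a) (l := t))
          have : a = 1 := Nat.eq_one_of_dvd_one (hprod ▸ List.dvd_prod (List.mem_cons_self (a := a) (l := t)))
          omega

lemma sum_divisors_moebius (n : ℕ) :
    (∑ d ∈ n.divisors, ArithmeticFunction.moebius d) = if n = 1 then 1 else 0 := by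
  have h2 : (ArithmeticFunction.moebius * ↑ArithmeticFunction.zeta : ArithmeticFunction ℤ) n
      = (1 : ArithmeticFunction ℤ) n := by
    rw [ArithmeticFunction.moebius_mul_coe_zeta]
  rwa [ArithmeticFunction.coe_mul_zeta_apply, ArithmeticFunction.one_apply] at h2

lemma ordFac_sum_eq_moebius : ∀ {n : ℕ}, 1 ≤ n →
    (∑ l ∈ ordFac n, (-1 : ℤ) ^ l.length) = ArithmeticFunction.moebius n := by
  intro n
  induction n using Nat.strong_induction_on with
  | _ n IH =>
    intro hn
    by_cases h : 2 ≤ n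
    · rw [ordFac, dif_pos h]
      rw [Finset.sum_biUnion]
      · have key : ∀ d ∈ (n.divisors.filter (fun d => 2 ≤ d)).attach,
            (∑ l ∈ (ordFac (n / d.1)).image (d.1 :: ·), (-1 : ℤ) ^ l.length)
              = -ArithmeticFunction.moebius (n / d.1) := by
          intro d _
          have hd := d.2
          simp only [Finset.mem_filter, Nat.mem_divisors] at hd
          rw [Finset.sum_image (by intro x _ y _ hxy; injection hxy)]
          have hnd : 1 ≤ n / d.1 := Nat.div_pos (Nat.le_of_dvd (by omega) hd.1.1) (by omega)
          have := IH (n / d.1) (Nat.div_lt_self (by omega) (by omega)) hnd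
          simp only [List.length_cons, pow_succ, ← this]
          rw [← Finset.sum_mul]
          ring
        rw [Finset.sum_congr rfl key]
        rw [Finset.sum_attach (n.divisors.filter (fun d => 2 ≤ d))
          (fun d => -ArithmeticFunction.moebius (n / d))]
        have split : (∑ d ∈ n.divisors.filter (fun d => 2 ≤ d),
            -ArithmeticFunction.moebius (n / d))
            = (∑ d ∈ n.divisors, -ArithmeticFunction.moebius (n / d))
              - (-ArithmeticFunction.moebius (n / 1)) := by
          rw [← Finset.sum_filter_add_sum_filter_not n.divisors (fun d => 2 ≤ d)]
          have : n.divisors.filter (fun d => ¬ 2 ≤ d) = {1} := by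
            ext a
            simp only [Finset.mem_filter, Nat.mem_divisors, Finset.mem_singleton]
            constructor
            · rintro ⟨⟨ha, _⟩, h2⟩
              have := Nat.pos_of_dvd_of_pos ha (by omega)
              omega
            · rintro rfl; exact ⟨⟨one_dvd n, by omega⟩, by omega⟩
          rw [this, Finset.sum_singleton]
          ring
        rw [split, Nat.div_one]
        rw [Nat.sum_div_divisors n (fun d => -ArithmeticFunction.moebius d)]
        rw [Finset.sum_neg_distrib, sum_divisors_moebius, if_neg (by omega)]
        ring
      · -- pairwise disjoint
        intro a ha b hb hab
        simp only [Function.onFun]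
        apply Finset.disjoint_left.mpr
        intro l hla hlb
        simp only [Finset.mem_image] at hla hlb
        obtain ⟨x, _, rfl⟩ := hla
        obtain ⟨y, _, hy⟩ := hlb
        apply hab
        exact Subtype.ext (by injection hy; omega)
    · have hn1 : n = 1 := by omega
      subst hn1
      rw [ordFac, dif_neg h]
      simp [ArithmeticFunction.moebius_apply_one]

/-- For every integer `r ≥ 2`, the sum of `(-1)^{k(φ)}` over all ordered factorizations
`φ` of `r` into factors each `≥ 2` (where `k(φ)` is the number of factors) equals `μ(r)`. -/
theorem sum_orderedFactorizations_neg_one_pow (r : ℕ) (hr : 2 ≤ r) :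
    (∑ᶠ φ : {l : List ℕ // (∀ a ∈ l, 2 ≤ a) ∧ l.prod = r},
        ((-1 : ℤ) ^ (φ : List ℕ).length)) = ArithmeticFunction.moebius r := by
  have hset : {l : List ℕ | (∀ a ∈ l, 2 ≤ a) ∧ l.prod = r} = ↑(ordFac r) := by
    ext l
    simp [mem_ordFac (by omega : 1 ≤ r)]
  calc (∑ᶠ φ : {l : List ℕ // (∀ a ∈ l, 2 ≤ a) ∧ l.prod = r}, ((-1 : ℤ) ^ (φ : List ℕ).length))
      = ∑ᶠ l ∈ {l : List ℕ | (∀ a ∈ l, 2 ≤ a) ∧ l.prod = r}, (-1 : ℤ) ^ l.length :=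
        finsum_set_coe_eq_finsum_mem (f := fun l : List ℕ => (-1 : ℤ) ^ l.length)
          {l : List ℕ | (∀ a ∈ l, 2 ≤ a) ∧ l.prod = r}
    _ = ∑ᶠ l ∈ (↑(ordFac r) : Set (List ℕ)), (-1 : ℤ) ^ l.length := by rw [hset]
    _ = ∑ l ∈ ordFac r, (-1 : ℤ) ^ l.length := finsum_mem_coe_finset _ _
    _ = ArithmeticFunction.moebius r := ordFac_sum_eq_moebius (by omega)
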